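/- Let K = k((t)), L/K a cyclic Galois extension of degree r (via the product setup L = L₀^m with L₀/K cyclic of degree d, r = md), x ∈ K^×, and for f = Σᵢ aᵢTⁱ ∈ D_{L,x} set w_{j,x}(f) = min_i (v_{j,t}(aᵢ) + i·v_t(x)/r), where v_{j,t} is the valuation on the j-th factor. Then v_t(Nrd(f)) ≥ d · Σ_{j=1}^m w_{j,x}(f). -/

import Mathlib

/-- The twisted cyclic shift `Φ(a₁,…,a_m) = (Φ₀(a_m), a₁, …, a_{m-1})` on `L = L₀^m`. -/
noncomputable def cycShift {L₀ : Type*} (m : ℕ) [NeZero m] (Φ₀ : L₀ → L₀)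
    (a : Fin m → L₀) : Fin m → L₀ :=
  fun i => if i = 0 then Φ₀ (a (i - 1)) else a (i - 1)

/-- The matrix `M_f` of right multiplication by `f = a₀ + a₁T + ⋯ + a_{r−1}T^{r−1}`
on `D_{L,x} = L[T;Φ]/(T^r − x)` in the `L`-basis `(1, T, …, T^{r-1})`; its
determinant is the reduced norm `Nrd(f)`. -/
noncomputable def oreMatrix {L : Type*} [CommRing L] (r : ℕ) (Φ : L → L) (x : L)
    (a : Fin r → L) : Matrix (Fin r) (Fin r) L :=
  Matrix.of fun u v =>
    if h : v.val ≤ u.val then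
      Φ^[v.val] (a ⟨u.val - v.val, by have := u.isLt; omega⟩)
    else
      x * Φ^[v.val] (a ⟨u.val + r - v.val, by have := u.isLt; have := v.isLt; omega⟩)

open Fin.NatCast

section helpers
variable {L₀ : Type*} [Field L₀] (v : L₀ → WithTop ℤ)
  (hv0 : ∀ a : L₀, v a = ⊤ ↔ a = 0)
  (hvmul : ∀ a b : L₀, v (a * b) = v a + v b)
  (hvadd : ∀ a b : L₀, min (v a) (v b) ≤ v (a + b))

include hv0 hvmul in
lemma vone : v 1 = 0 := by
  have h := hvmul 1 1
  rw [one_mul] at h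
  cases hv1 : v 1 with
  | top => exact absurd ((hv0 1).mp hv1) one_ne_zero
  | coe k =>
    rw [hv1, ← WithTop.coe_add, WithTop.coe_eq_coe] at h
    have : k = 0 := by omega
    simp [this]

include hv0 hvmul in
lemma vneg (b : L₀) : v (-b) = v b := by
  have hm1 : v (-1 : L₀) = 0 := by
    have h := hvmul (-1) (-1)
    rw [neg_mul_neg, one_mul, vone v hv0 hvmul] at h
    cases hv1 : v (-1 : L₀) with
    | top => rw [hv1] at h; simp at h
    | coe k =>
      rw [hv1] at h
      have h2 : (0:ℤ) = k + k := by exact_mod_cast h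
      have : k = 0 := by omega
      simp [hv1, this]
  calc v (-b) = v ((-1) * b) := by rw [neg_one_mul]
  _ = v (-1 : L₀) + v b := hvmul _ _
  _ = v b := by rw [hm1, zero_add]

include hv0 hvmul in
lemma vusmul (ε : ℤˣ) (b : L₀) : v (ε • b) = v b := by
  rcases Int.units_eq_one_or ε with h | h <;> subst h
  · simp
  · rw [Units.smul_def]
    push_cast
    rw [neg_one_zsmul, vneg v hv0 hvmul]

include hv0 hvadd in
lemma vsum {ι : Type*} (s : Finset ι) (f : ι → L₀) :
    (s.inf fun i => v (f i)) ≤ v (∑ i ∈ s, f i) := by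
  classical
  induction s using Finset.cons_induction with
  | empty => simp [(hv0 0).mpr rfl]
  | cons i s hi ih =>
    rw [Finset.inf_cons, Finset.sum_cons]
    exact le_trans (inf_le_inf_left _ ih) (hvadd _ _)

include hv0 hvmul in
lemma vprod {ι : Type*} (s : Finset ι) (f : ι → L₀) :
    v (∏ i ∈ s, f i) = ∑ i ∈ s, v (f i) := by
  classical
  induction s using Finset.cons_induction with
  | empty => simpa using vone v hv0 hvmul
  | cons i s hi ih => rw [Finset.prod_cons, Finset.sum_cons, hvmul, ih]

end helpers

lemma nsmul_coe (k : ℕ) (c : ℤ) :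
    k • ((c : WithTop ℤ)) = (((k : ℤ) * c : ℤ) : WithTop ℤ) := by
  induction k with
  | zero => simp
  | succ k ih =>
    rw [succ_nsmul, ih, ← WithTop.coe_add, WithTop.coe_eq_coe, Nat.cast_add, Nat.cast_one]
    ring

lemma nsmul_mono (k : ℕ) {a b : WithTop ℤ} (h : a ≤ b) : k • a ≤ k • b := by
  induction k with
  | zero => simp
  | succ k ih => rw [succ_nsmul, succ_nsmul]; exact add_le_add ih h

lemma v_cycShift_iter {L₀ : Type*} [Field L₀] {m : ℕ} [NeZero m]
    (Φ₀ : L₀ ≃+* L₀) (v : L₀ → WithTop ℤ) (hΦ₀v : ∀ a : L₀, v (Φ₀ a) = v a)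
    (c : ℕ) (b : Fin m → L₀) (j : Fin m) :
    v (((cycShift m ⇑Φ₀)^[c] b) j) = v (b (j - (c : Fin m))) := by
  induction c generalizing j with
  | zero => simp
  | succ c ih =>
    rw [Function.iterate_succ_apply']
    have h1 : v ((cycShift m ⇑Φ₀ ((cycShift m ⇑Φ₀)^[c] b)) j)
        = v (((cycShift m ⇑Φ₀)^[c] b) (j - 1)) := by
      unfold cycShift
      split <;> simp [hΦ₀v]
    rw [h1, ih]
    congr 1
    push_cast
    rw [sub_sub, add_comm]

lemma sum_fin_cast {β : Type*} [AddCommMonoid β] (m d : ℕ) [NeZero m] (g : Fin m → β) :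
    ∑ i : Fin (m * d), g ((i.val : Fin m)) = d • ∑ j : Fin m, g j := by
  classical
  let e : Fin d × Fin m ≃ Fin (m * d) :=
    finProdFinEquiv.trans (finCongr (Nat.mul_comm d m))
  rw [← Equiv.sum_comp e (fun i : Fin (m * d) => g ((i.val : Fin m)))]
  have key : ∀ p : Fin d × Fin m, ((e p).val : Fin m) = p.2 := by
    intro p
    have : (e p).val = p.2.val + m * p.1.val := rfl
    rw [this]
    push_cast
    simp [Fin.cast_val_eq_self]
  simp only [key]
  rw [Fintype.sum_prod_type]
  simp [Finset.sum_const]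


/-- `v_t(Nrd(f)) ≥ d · Σ_{j=1}^m w_{j,x}(f)`, where
`w_{j,x}(f) = min_i (v_j(aᵢ) + i·v(x)/r)`.  Both sides are stated multiplied
by `r` (so `w_{j,x}` appears as `min_i (r·v_j(aᵢ) + i·v(x))`), and `Nrd(f)`,
which lies in `K`, is read on any coordinate `j₀` of `det M_f ∈ L = L₀^m`. -/
theorem stmt_10 (L₀ : Type*) [Field L₀] (d m r : ℕ) (hd : 0 < d) (hm : 0 < m)
    [NeZero m] (hr : r = m * d) (hrpos : 0 < r)
    (Φ₀ : L₀ ≃+* L₀) (hΦ₀d : (⇑Φ₀)^[d] = id)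
    (v : L₀ → WithTop ℤ)
    (hv0 : ∀ a : L₀, v a = ⊤ ↔ a = 0)
    (hvmul : ∀ a b : L₀, v (a * b) = v a + v b)
    (hvadd : ∀ a b : L₀, min (v a) (v b) ≤ v (a + b))
    (hΦ₀v : ∀ a : L₀, v (Φ₀ a) = v a)
    (x : L₀) (hxfix : Φ₀ x = x) (hx : x ≠ 0) (n : ℤ) (hvx : v x = (n : WithTop ℤ))
    (a : Fin r → (Fin m → L₀)) :
    ∀ j₀ : Fin m,
      d • ∑ j : Fin m,
          (Finset.univ.inf fun i : Fin r =>
            r • v (a i j) + (((i.val : ℤ) * n : ℤ) : WithTop ℤ))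
        ≤ r • v (((oreMatrix r (cycShift m ⇑Φ₀) (fun _ => x) a).map
            (fun g => g j₀)).det) := by
  intro j₀
  classical
  set w : Fin m → WithTop ℤ := fun j => Finset.univ.inf fun i : Fin r =>
      r • v (a i j) + (((i.val : ℤ) * n : ℤ) : WithTop ℤ) with hw
  set N : Matrix (Fin r) (Fin r) L₀ :=
    (oreMatrix r (cycShift m ⇑Φ₀) (fun _ => x) a).map (fun g => g j₀) with hN
  -- lower bound det by a single permutation term
  have hdetinf : (Finset.univ.inf fun σ : Equiv.Perm (Fin r) =>
      v (Equiv.Perm.sign σ • ∏ i, N (σ i) i)) ≤ v N.det := by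
    rw [Matrix.det_apply]
    exact vsum v hv0 hvadd _ _
  obtain ⟨σ, -, hσ⟩ := Finset.exists_mem_eq_inf (Finset.univ : Finset (Equiv.Perm (Fin r)))
    Finset.univ_nonempty (fun σ => v (Equiv.Perm.sign σ • ∏ i, N (σ i) i))
  rw [hσ] at hdetinf
  have hterm : v (Equiv.Perm.sign σ • ∏ i, N (σ i) i) = ∑ i : Fin r, v (N (σ i) i) := by
    rw [vusmul v hv0 hvmul, vprod v hv0 hvmul]
  -- per-entry data
  set c : Fin r → ℤ := fun i => if i.val ≤ (σ i).val then 0 else n with hc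
  set b : Fin r → Fin r := fun i =>
    if h : i.val ≤ (σ i).val then ⟨(σ i).val - i.val, by have := (σ i).isLt; omega⟩
    else ⟨(σ i).val + r - i.val, by have := (σ i).isLt; have := i.isLt; omega⟩ with hb
  have hA : ∀ i : Fin r, v (N (σ i) i)
      = ((c i : ℤ) : WithTop ℤ) + v (a (b i) (j₀ - ((i.val : ℕ) : Fin m))) := by
    intro i
    rw [hN]
    simp only [Matrix.map_apply, oreMatrix, Matrix.of_apply]
    by_cases h : i.val ≤ (σ i).val
    · rw [dif_pos h]
      rw [v_cycShift_iter Φ₀ v hΦ₀v]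
      simp only [hc, hb, if_pos h, dif_pos h]
      simp
    · rw [dif_neg h, Pi.mul_apply, hvmul, hvx]
      rw [v_cycShift_iter Φ₀ v hΦ₀v]
      simp only [hc, hb, if_neg h, dif_neg h]
  have hBpt : ∀ i : Fin r, (((b i).val : ℤ) * n)
      = ((((σ i).val : ℤ) - (i.val : ℤ)) * n) + (r : ℤ) * c i := by
    intro i
    simp only [hb, hc]
    by_cases h : i.val ≤ (σ i).val
    · rw [dif_pos h, if_pos h]
      push_cast [Nat.cast_sub h]
      ring
    · rw [dif_neg h, if_neg h]
      have h2 : i.val ≤ (σ i).val + r := by have := i.isLt; omega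
      push_cast [Nat.cast_sub h2]
      ring
  have hB : (∑ i : Fin r, ((b i).val : ℤ) * n) = ∑ i : Fin r, (r : ℤ) * c i := by
    calc (∑ i : Fin r, ((b i).val : ℤ) * n)
        = ∑ i : Fin r, (((((σ i).val : ℤ) - (i.val : ℤ)) * n) + (r : ℤ) * c i) :=
          Finset.sum_congr rfl fun i _ => hBpt i
      _ = (∑ i : Fin r, ((((σ i).val : ℤ) - (i.val : ℤ)) * n)) + ∑ i : Fin r, (r : ℤ) * c i :=
          Finset.sum_add_distrib
      _ = ∑ i : Fin r, (r : ℤ) * c i := by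
          have : (∑ i : Fin r, (((σ i).val : ℤ) - (i.val : ℤ))) = 0 := by
            rw [Finset.sum_sub_distrib]
            rw [Equiv.sum_comp σ (fun i : Fin r => ((i.val : ℤ)))]
            ring
          rw [← Finset.sum_mul, this, zero_mul, zero_add]
  -- main chain
  have step1 : d • ∑ j : Fin m, w j = ∑ i : Fin r, w (j₀ - ((i.val : ℕ) : Fin m)) := by
    subst hr
    rw [sum_fin_cast m d (fun j => w (j₀ - j))]
    congr 1
    exact (Equiv.sum_comp (Equiv.subLeft j₀) w).symm
  have step2 : ∑ i : Fin r, w (j₀ - ((i.val : ℕ) : Fin m))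
      ≤ ∑ i : Fin r, (r • v (a (b i) (j₀ - ((i.val : ℕ) : Fin m)))
          + ((((b i).val : ℤ) * n : ℤ) : WithTop ℤ)) :=
    Finset.sum_le_sum fun i _ => Finset.inf_le (Finset.mem_univ (b i))
  have step3 : (∑ i : Fin r, (r • v (a (b i) (j₀ - ((i.val : ℕ) : Fin m)))
          + ((((b i).val : ℤ) * n : ℤ) : WithTop ℤ)))
      = r • ∑ i : Fin r, v (N (σ i) i) := by
    rw [Finset.sum_add_distrib, ← WithTop.coe_sum, hB, WithTop.coe_sum]
    rw [Finset.smul_sum]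
    rw [← Finset.sum_add_distrib]
    refine Finset.sum_congr rfl fun i _ => ?_
    rw [hA i, smul_add, nsmul_coe]
    push_cast
    rw [add_comm]
  calc d • ∑ j : Fin m, w j
      = ∑ i : Fin r, w (j₀ - ((i.val : ℕ) : Fin m)) := step1
    _ ≤ r • ∑ i : Fin r, v (N (σ i) i) := step3 ▸ step2
    _ = r • v (Equiv.Perm.sign σ • ∏ i, N (σ i) i) := by rw [hterm]
    _ ≤ r • v N.det := nsmul_mono r hdetinf
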